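/- Let d ≥ 1 and let Γ be an additive sub-semigroup of ℕ^{d+1} that generates ℤ^{d+1} as a group. Let D be a compact convex subset of ℝ^d contained in the interior of Δ(Γ). Then there exists a finitely generated sub-semigroup Γ' ⊆ Γ such that Γ' generates ℤ^{d+1} as a group and D is contained in the interior of Δ(Γ'). -/

import Mathlib

/-- The image of a vector of natural numbers in `ℝ^n`. -/
def natVecR {n : ℕ} (γ : Fin n → ℕ) : Fin n → ℝ := fun i => (γ i : ℝ)

/-- `Σ(Γ)`: the closed convex cone generated by `Γ ⊆ ℕ^n` in `ℝ^n`, i.e. the topological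
closure of the set of all finite nonnegative real linear combinations of elements of `Γ`. -/
def coneOf {n : ℕ} (Γ : Set (Fin n → ℕ)) : Set (Fin n → ℝ) :=
  closure { x | ∃ (k : ℕ) (c : Fin k → ℝ) (g : Fin k → (Fin n → ℕ)),
    (∀ i, 0 ≤ c i) ∧ (∀ i, g i ∈ Γ) ∧ x = ∑ i, c i • natVecR (g i) }

/-- `Δ(Γ) = {x ∈ ℝ^d : (x,1) ∈ Σ(Γ)}`. -/
def deltaOf {d : ℕ} (Γ : Set (Fin (d+1) → ℕ)) : Set (Fin d → ℝ) :=
  { x | Fin.snoc x (1 : ℝ) ∈ coneOf Γ }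

/-- `Γ` generates `ℤ^{d+1}` as a group. -/
def gensGroup {d : ℕ} (Γ : Set (Fin (d+1) → ℕ)) : Prop :=
  AddSubgroup.closure ((fun γ : Fin (d+1) → ℕ => (fun i => (γ i : ℤ))) '' Γ) = ⊤

open Submodule Set

theorem nnsmul_eq {n : ℕ} (c : NNReal) (v : Fin n → ℝ) : c • v = (c : ℝ) • v := by
  funext i; simp [NNReal.smul_def]

theorem coneOf_eq {n : ℕ} (Γ : Set (Fin n → ℕ)) :
    coneOf Γ = closure ((Submodule.span NNReal (natVecR '' Γ) : Submodule NNReal (Fin n → ℝ)) : Set (Fin n → ℝ)) := by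
  unfold coneOf
  refine congrArg closure (Set.ext fun x => ⟨?_, ?_⟩)
  · rintro ⟨k, c, g, hc, hg, rfl⟩
    refine Submodule.sum_mem _ fun i _ => ?_
    have := Submodule.smul_mem (Submodule.span NNReal (natVecR '' Γ)) (⟨c i, hc i⟩ : NNReal)
      (Submodule.subset_span ⟨g i, hg i, rfl⟩)
    exact this
  · intro hx
    obtain ⟨m, f, g, hsum⟩ := mem_span_set'.mp hx
    choose γ hγ hγeq using fun i => (g i).2
    refine ⟨m, fun i => (f i : ℝ), γ, fun i => (f i).2, hγ, ?_⟩
    rw [← hsum]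
    congr 1
    funext i
    rw [nnsmul_eq, hγeq]

theorem convex_spanNN {n : ℕ} (s : Set (Fin n → ℝ)) :
    Convex ℝ ((Submodule.span NNReal s : Submodule NNReal (Fin n → ℝ)) : Set (Fin n → ℝ)) := by
  intro x hx y hy a b ha hb _
  have h1 := Submodule.smul_mem (Submodule.span NNReal s) (⟨a, ha⟩ : NNReal) hx
  have h2 := Submodule.smul_mem (Submodule.span NNReal s) (⟨b, hb⟩ : NNReal) hy
  replace h1 : a • x ∈ Submodule.span NNReal s := h1
  replace h2 : b • y ∈ Submodule.span NNReal s := h2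
  exact Submodule.add_mem _ h1 h2

theorem convex_coneOf {n : ℕ} (Γ : Set (Fin n → ℕ)) : Convex ℝ (coneOf Γ) := by
  rw [coneOf_eq]; exact (convex_spanNN _).closure

theorem coneOf_mono {n : ℕ} {Γ₁ Γ₂ : Set (Fin n → ℕ)} (h : Γ₁ ⊆ Γ₂) : coneOf Γ₁ ⊆ coneOf Γ₂ := by
  rw [coneOf_eq, coneOf_eq]
  exact closure_mono (Submodule.span_mono (Set.image_mono h))

theorem coneOf_smul_mem {n : ℕ} (Γ : Set (Fin n → ℕ)) {t : ℝ} (ht : 0 ≤ t) {x : Fin n → ℝ}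
    (hx : x ∈ coneOf Γ) : t • x ∈ coneOf Γ := by
  rw [coneOf_eq] at hx ⊢
  refine map_mem_closure (continuous_const_smul t) hx fun y hy => ?_
  have := Submodule.smul_mem (Submodule.span NNReal (natVecR '' Γ)) (⟨t, ht⟩ : NNReal) hy
  exact this

/-- coordinatewise cast ℤ → ℝ as a ℤ-linear map -/
def castLM (n : ℕ) : (Fin n → ℤ) →ₗ[ℤ] (Fin n → ℝ) where
  toFun v := fun i => (v i : ℝ)
  map_add' v w := by funext i; simp
  map_smul' z v := by funext i; simp [zsmul_eq_mul]

theorem spanZ_top {n : ℕ} (Γ : Set (Fin n → ℕ))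
    (hgen : AddSubgroup.closure ((fun γ : Fin n → ℕ => (fun i => (γ i : ℤ))) '' Γ) = ⊤) :
    Submodule.span ℤ ((fun γ : Fin n → ℕ => (fun i => (γ i : ℤ))) '' Γ) = ⊤ := by
  rw [eq_top_iff]
  intro x _
  have hx : x ∈ AddSubgroup.closure ((fun γ : Fin n → ℕ => (fun i => (γ i : ℤ))) '' Γ) := by
    rw [hgen]; trivial
  rw [← Submodule.span_int_eq_addSubgroupClosure] at hx
  exact hx

theorem spanR_top {n : ℕ} (Γ : Set (Fin n → ℕ))
    (hgen : AddSubgroup.closure ((fun γ : Fin n → ℕ => (fun i => (γ i : ℤ))) '' Γ) = ⊤) :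
    Submodule.span ℝ (natVecR '' Γ) = ⊤ := by
  rw [eq_top_iff, ← (Pi.basisFun ℝ (Fin n)).span_eq, Submodule.span_le]
  rintro _ ⟨i, rfl⟩
  have h1 : Pi.single i (1:ℤ) ∈ Submodule.span ℤ ((fun γ : Fin n → ℕ => (fun i => (γ i : ℤ))) '' Γ) := by
    rw [spanZ_top Γ hgen]; trivial
  have h2 := Submodule.apply_mem_span_image_of_mem_span (castLM n) h1
  have himg : castLM n '' ((fun γ : Fin n → ℕ => (fun i => (γ i : ℤ))) '' Γ) = natVecR '' Γ := by
    rw [Set.image_image]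
    refine Set.image_congr fun γ _ => ?_
    funext j
    simp [castLM, natVecR]
  rw [himg] at h2
  have h3 : castLM n (Pi.single i (1:ℤ)) = Pi.basisFun ℝ (Fin n) i := by
    funext j
    by_cases h : j = i
    · subst h; simp [castLM]
    · simp [castLM, Pi.single_apply, h]
  rw [h3] at h2
  exact SetLike.le_def.mp (Submodule.span_le_restrictScalars ℤ ℝ (natVecR '' Γ)) h2

theorem exists_basis_in_image {n : ℕ} (Γ : Set (Fin n → ℕ))
    (hgen : AddSubgroup.closure ((fun γ : Fin n → ℕ => (fun i => (γ i : ℤ))) '' Γ) = ⊤) :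
    ∃ (t : Finset (Fin n → ℝ)) (B : Module.Basis ↥(t : Set (Fin n → ℝ)) ℝ (Fin n → ℝ)),
      (↑t : Set (Fin n → ℝ)) ⊆ natVecR '' Γ ∧ ∀ v : ↥(t : Set (Fin n → ℝ)), B v = ↑v := by
  obtain ⟨t, hts, htspan, htli⟩ := exists_linearIndependent ℝ (natVecR '' Γ)
  rw [spanR_top Γ hgen] at htspan
  have hfin : t.Finite := htli.setFinite
  lift t to Finset (Fin n → ℝ) using hfin
  refine ⟨t, Module.Basis.mk htli ?_, hts, fun v => Module.Basis.mk_apply _ _ _⟩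
  rw [Subtype.range_coe, htspan]

section helpers
variable {E : Type*} [NormedAddCommGroup E] [NormedSpace ℝ E]

theorem interior_closure_subset_interior_of_convex {s : Set E} (hs : Convex ℝ s)
    {u : E} (hu : u ∈ interior s) : interior (closure s) ⊆ interior s := by
  intro p hp
  rcases eq_or_ne p u with rfl | hne
  · exact hu
  obtain ⟨r, hr, hball⟩ := Metric.isOpen_iff.mp isOpen_interior p hp
  set ε : ℝ := r / (2 * (‖p - u‖ + 1)) with hε
  have hpu : (0:ℝ) < ‖p - u‖ + 1 := by positivity
  have hεpos : 0 < ε := by positivity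
  have hq : p + ε • (p - u) ∈ closure s := by
    refine interior_subset <| hball ?_
    rw [Metric.mem_ball, dist_eq_norm]
    have : p + ε • (p - u) - p = ε • (p - u) := by abel
    rw [this, norm_smul, Real.norm_eq_abs, abs_of_pos hεpos]
    calc ε * ‖p - u‖ < ε * (2 * (‖p - u‖ + 1)) := by
          refine mul_lt_mul_of_pos_left ?_ hεpos
          nlinarith [norm_nonneg (p - u)]
      _ = r := by rw [hε]; field_simp
  have hseg : p ∈ openSegment ℝ u (p + ε • (p - u)) := by
    refine ⟨ε / (1 + ε), 1 / (1 + ε), by positivity, by positivity, ?_, ?_⟩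
    · field_simp; ring
    · have h1ε : (1:ℝ) + ε ≠ 0 := by positivity
      match_scalars <;> field_simp <;> ring
  exact hs.openSegment_interior_closure_subset_interior hu hq hseg

end helpers

section posCone
variable {n : ℕ} {ι : Type*} [Fintype ι] (B : Module.Basis ι ℝ (Fin n → ℝ))

theorem isOpen_posCone (z : Fin n → ℝ) :
    IsOpen {x : Fin n → ℝ | ∀ i, 0 < B.equivFun (x - z) i} := by
  have hc : Continuous fun x : Fin n → ℝ => B.equivFun (x - z) :=
    (LinearMap.continuous_of_finiteDimensional (B.equivFun : (Fin n → ℝ) →ₗ[ℝ] (ι → ℝ))).comp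
      (continuous_id.sub continuous_const)
  have : {x : Fin n → ℝ | ∀ i, 0 < B.equivFun (x - z) i} =
      ⋂ i, (fun x => B.equivFun (x - z) i) ⁻¹' Set.Ioi 0 := by
    ext x; simp [Set.mem_iInter]
  rw [this]
  exact isOpen_iInter_of_finite fun i =>
    (isOpen_Ioi).preimage ((continuous_apply i).comp hc)

theorem posCone_mem_span {s : Set (Fin n → ℝ)} (hBs : ∀ i, B i ∈ s) {z : Fin n → ℝ}
    (hz : z ∈ Submodule.span NNReal s) {x : Fin n → ℝ}
    (hx : ∀ i, 0 < B.equivFun (x - z) i) : x ∈ Submodule.span NNReal s := by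
  have hxz : x = z + ∑ i, B.equivFun (x - z) i • B i := by
    rw [B.sum_equivFun (x - z)]; abel
  rw [hxz]
  refine Submodule.add_mem _ hz (Submodule.sum_mem _ fun i _ => ?_)
  have := Submodule.smul_mem (Submodule.span NNReal s) (⟨B.equivFun (x - z) i, (hx i).le⟩ : NNReal)
    (Submodule.subset_span (hBs i))
  exact this

end posCone

/-- Lemma A: every interior point of the cone of `Γ` is an interior point of the cone of a
finite subset of `Γ`. -/
theorem exists_finset_interior_coneOf {n : ℕ} (Γ : Set (Fin n → ℕ)) {ι : Type*} [Fintype ι]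
    (B : Module.Basis ι ℝ (Fin n → ℝ)) (τ : ι → (Fin n → ℕ)) (hτ : ∀ i, τ i ∈ Γ)
    (hB : ∀ i, B i = natVecR (τ i))
    {p : Fin n → ℝ} (hp : p ∈ interior (coneOf Γ)) :
    ∃ S : Finset (Fin n → ℕ), ↑S ⊆ Γ ∧ (∀ i, τ i ∈ S) ∧ p ∈ interior (coneOf ↑S) := by
  classical
  set M : Set (Fin n → ℝ) :=
    ((Submodule.span NNReal (natVecR '' Γ) : Submodule NNReal (Fin n → ℝ)) : Set (Fin n → ℝ))
    with hM
  set u : Fin n → ℝ := ∑ i, B i with hu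
  -- u is interior to M
  have hBu : ∀ i, B.equivFun u i = 1 := by
    intro i
    rw [hu, map_sum]
    have h1 : ∀ j, B.equivFun (B j) i = if j = i then 1 else 0 := by
      intro j; rw [B.equivFun_apply, B.repr_self]
      simp [Finsupp.single_apply]
    simp [h1]
  have hupos : ∀ i, 0 < B.equivFun (u - 0) i := by
    intro i; rw [sub_zero, hBu]; norm_num
  have huM : u ∈ interior M := by
    rw [mem_interior]
    refine ⟨{x | ∀ i, 0 < B.equivFun (x - 0) i}, ?_, isOpen_posCone B 0, hupos⟩
    intro x hx
    exact posCone_mem_span B (fun i => by rw [hB i]; exact Set.mem_image_of_mem _ (hτ i))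
      (Submodule.zero_mem _) hx
  -- p is interior to M
  have hpM : p ∈ interior M := by
    rw [coneOf_eq, ← hM] at hp
    exact interior_closure_subset_interior_of_convex (convex_spanNN _) huM hp
  -- pull back a bit: find δ > 0 with p - δ • u ∈ M
  obtain ⟨δ, hδpos, hδ⟩ : ∃ δ : ℝ, 0 < δ ∧ p - δ • u ∈ M := by
    have hcont : Continuous fun δ : ℝ => p - δ • u := by continuity
    have h0 : (fun δ : ℝ => p - δ • u) 0 ∈ interior M := by simpa using hpM
    obtain ⟨r, hr, hball⟩ := Metric.isOpen_iff.mp (isOpen_interior.preimage hcont) 0 h0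
    refine ⟨r / 2, by positivity, interior_subset (hball ?_)⟩
    rw [Metric.mem_ball, dist_zero_right, Real.norm_eq_abs, abs_of_pos (by positivity)]
    linarith
  -- write p - δ • u as a nonneg combination
  rw [hM, SetLike.mem_coe] at hδ
  obtain ⟨m, f, g, hsum⟩ := mem_span_set'.mp hδ
  choose γ hγΓ hγeq using fun i => (g i).2
  set S : Finset (Fin n → ℕ) := Finset.image γ Finset.univ ∪ Finset.image τ Finset.univ with hS
  have hSΓ : (↑S : Set (Fin n → ℕ)) ⊆ Γ := by
    intro x hx
    simp only [hS, Finset.coe_union, Set.mem_union, Finset.coe_image, Set.mem_image] at hx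
    rcases hx with ⟨i, _, rfl⟩ | ⟨i, _, rfl⟩
    · exact hγΓ i
    · exact hτ i
  have hτS : ∀ i, τ i ∈ S := fun i => by
    simp [hS]
  refine ⟨S, hSΓ, hτS, ?_⟩
  have hzS : p - δ • u ∈ Submodule.span NNReal (natVecR '' (↑S : Set (Fin n → ℕ))) := by
    rw [← hsum]
    refine Submodule.sum_mem _ fun i _ => Submodule.smul_mem _ _ (Submodule.subset_span ?_)
    refine ⟨γ i, ?_, hγeq i⟩
    simp [hS]
  have hppos : ∀ i, 0 < B.equivFun (p - (p - δ • u)) i := by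
    intro i
    have h2 : p - (p - δ • u) = δ • u := by abel
    rw [h2, map_smul]
    have h3 : (δ • B.equivFun u) i = δ * B.equivFun u i := rfl
    rw [h3, hBu]
    simpa using hδpos
  rw [coneOf_eq]
  refine interior_mono subset_closure ?_
  rw [mem_interior]
  refine ⟨{x | ∀ i, 0 < B.equivFun (x - (p - δ • u)) i}, ?_,
    isOpen_posCone B (p - δ • u), hppos⟩
  intro x hx
  exact posCone_mem_span B
    (fun i => by rw [hB i]; exact Set.mem_image_of_mem _ (hτS i)) hzS hx

theorem continuous_snoc1 (d : ℕ) :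
    Continuous fun x : Fin d → ℝ => (Fin.snoc x (1:ℝ) : Fin (d+1) → ℝ) := by
  refine continuous_pi fun i => ?_
  refine Fin.lastCases ?_ ?_ i
  · simp only [Fin.snoc_last]; exact continuous_const
  · intro j; simp only [Fin.snoc_castSucc]; exact continuous_apply j

theorem mem_interior_deltaOf {d : ℕ} {Γ : Set (Fin (d+1) → ℕ)} {x : Fin d → ℝ}
    (h : Fin.snoc x (1:ℝ) ∈ interior (coneOf Γ)) : x ∈ interior (deltaOf Γ) := by
  rw [mem_interior]
  refine ⟨(fun y : Fin d → ℝ => (Fin.snoc y (1:ℝ) : Fin (d+1) → ℝ)) ⁻¹' interior (coneOf Γ),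
    fun y hy => (interior_subset (Set.mem_preimage.mp hy) : Fin.snoc y (1:ℝ) ∈ coneOf Γ),
    (continuous_snoc1 d).isOpen_preimage _ isOpen_interior, h⟩

theorem snoc_mem_interior_coneOf {d : ℕ} {Γ : Set (Fin (d+1) → ℕ)} {x : Fin d → ℝ}
    (h : x ∈ interior (deltaOf Γ)) : Fin.snoc x (1:ℝ) ∈ interior (coneOf Γ) := by
  set V : Set (Fin (d+1) → ℝ) :=
    {y | 0 < y (Fin.last d)} ∩
      (fun y : Fin (d+1) → ℝ => fun j : Fin d => y (Fin.castSucc j) / y (Fin.last d)) ⁻¹'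
        interior (deltaOf Γ) with hV
  have hVopen : IsOpen V := by
    refine ContinuousOn.isOpen_inter_preimage ?_ ?_ isOpen_interior
    · rw [continuousOn_pi]
      intro j
      exact ((continuous_apply _).continuousOn.div
        (continuous_apply _).continuousOn (fun y hy => ne_of_gt hy))
    · exact isOpen_lt continuous_const (continuous_apply _)
  have hmem : Fin.snoc x (1:ℝ) ∈ V := by
    constructor
    · simp [Fin.snoc_last]
    · simp only [Set.mem_preimage, Fin.snoc_castSucc, Fin.snoc_last, div_one]
      exact h
  have hVsub : V ⊆ coneOf Γ := by
    rintro y ⟨hy1, hy2⟩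
    have hz : (fun j : Fin d => y (Fin.castSucc j) / y (Fin.last d)) ∈ deltaOf Γ :=
      interior_subset hy2
    have : y = y (Fin.last d) •
        (Fin.snoc (fun j : Fin d => y (Fin.castSucc j) / y (Fin.last d)) (1:ℝ) :
          Fin (d+1) → ℝ) := by
      funext i
      refine Fin.lastCases ?_ ?_ i
      · simp [Fin.snoc_last]
      · intro j
        simp only [Pi.smul_apply, Fin.snoc_castSucc, smul_eq_mul]
        rw [mul_comm, div_mul_cancel₀ _ (ne_of_gt hy1)]
    rw [this]
    exact coneOf_smul_mem Γ hy1.le hz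
  exact interior_maximal hVsub hVopen hmem

/-- The submodule of elements of `ℤ^n` lying in the span of the image of a finite subset of Γ. -/
def finSpan {n : ℕ} (Γ : Set (Fin n → ℕ)) : Submodule ℤ (Fin n → ℤ) where
  carrier := {x | ∃ S : Finset (Fin n → ℕ), ↑S ⊆ Γ ∧
    x ∈ Submodule.span ℤ ((fun γ : Fin n → ℕ => (fun i => (γ i : ℤ))) '' ↑S)}
  zero_mem' := ⟨∅, by simp, Submodule.zero_mem _⟩
  add_mem' := by
    classical
    rintro x y ⟨S, hS, hx⟩ ⟨T, hT, hy⟩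
    refine ⟨S ∪ T, by simp [Set.union_subset_iff, hS, hT], Submodule.add_mem _ ?_ ?_⟩
    · exact Submodule.span_mono (Set.image_mono (by simp)) hx
    · exact Submodule.span_mono (Set.image_mono (by simp)) hy
  smul_mem' := by
    rintro c x ⟨S, hS, hx⟩
    exact ⟨S, hS, Submodule.smul_mem _ c hx⟩

theorem exists_finset_gens {n : ℕ} (Γ : Set (Fin n → ℕ))
    (hgen : AddSubgroup.closure ((fun γ : Fin n → ℕ => (fun i => (γ i : ℤ))) '' Γ) = ⊤) :
    ∃ S₀ : Finset (Fin n → ℕ), ↑S₀ ⊆ Γ ∧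
      AddSubgroup.closure ((fun γ : Fin n → ℕ => (fun i => (γ i : ℤ))) '' ↑S₀) = ⊤ := by
  classical
  have htop : ∀ x : Fin n → ℤ, x ∈ finSpan Γ := by
    intro x
    have hx : x ∈ Submodule.span ℤ ((fun γ : Fin n → ℕ => (fun i => (γ i : ℤ))) '' Γ) := by
      have : x ∈ AddSubgroup.closure ((fun γ : Fin n → ℕ => (fun i => (γ i : ℤ))) '' Γ) := by
        rw [hgen]; trivial
      rwa [← Submodule.span_int_eq_addSubgroupClosure] at this
    refine Submodule.span_le.mpr ?_ hx
    rintro _ ⟨γ, hγ, rfl⟩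
    exact ⟨{γ}, by simpa using hγ,
      Submodule.subset_span ⟨γ, by simp, rfl⟩⟩
  choose T hT hxT using fun i : Fin n => htop (Pi.single i 1)
  refine ⟨Finset.univ.biUnion T, ?_, ?_⟩
  · intro x hx
    simp only [Finset.coe_biUnion, Finset.coe_univ, Set.mem_iUnion, Set.mem_univ,
      true_implies] at hx
    obtain ⟨i, _, hi⟩ := hx
    exact hT i hi
  · have hsingles : ∀ i : Fin n, Pi.single i (1:ℤ) ∈
        Submodule.span ℤ ((fun γ : Fin n → ℕ => (fun i => (γ i : ℤ))) '' ↑(Finset.univ.biUnion T)) := by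
      intro i
      refine Submodule.span_mono (Set.image_mono ?_) (hxT i)
      intro x hx
      simp only [Finset.coe_biUnion, Finset.coe_univ, Set.mem_iUnion, Set.mem_univ, true_implies]
      exact ⟨i, trivial, hx⟩
    have hspan : Submodule.span ℤ
        ((fun γ : Fin n → ℕ => (fun i => (γ i : ℤ))) '' ↑(Finset.univ.biUnion T)) = ⊤ := by
      rw [eq_top_iff, ← (Pi.basisFun ℤ (Fin n)).span_eq, Submodule.span_le]
      rintro _ ⟨i, rfl⟩
      have : Pi.basisFun ℤ (Fin n) i = Pi.single i (1:ℤ) := by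
        funext j; simp [Pi.basisFun_apply]
      rw [this]
      exact hsingles i
    have := Submodule.span_int_eq_addSubgroupClosure
      ((fun γ : Fin n → ℕ => (fun i => (γ i : ℤ))) '' ↑(Finset.univ.biUnion T))
    rw [hspan] at this
    rw [← this]
    rfl

theorem deltaOf_mono {d : ℕ} {Γ₁ Γ₂ : Set (Fin (d+1) → ℕ)} (h : Γ₁ ⊆ Γ₂) :
    deltaOf Γ₁ ⊆ deltaOf Γ₂ := fun _ hx => coneOf_mono h hx

/-- For any compact convex `D` contained in the interior of `Δ(Γ)`, there is a finitely
generated sub-semigroup `Γ' ⊆ Γ` generating `ℤ^{d+1}` as a group, with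
`D ⊆ interior Δ(Γ')`. -/
theorem finitely_generated_approximation (d : ℕ) (hd : 1 ≤ d) (Γ : Set (Fin (d+1) → ℕ))
    (h0 : (0 : Fin (d+1) → ℕ) ∈ Γ)
    (hadd : ∀ x ∈ Γ, ∀ y ∈ Γ, x + y ∈ Γ)
    (hgen : gensGroup Γ)
    (D : Set (Fin d → ℝ)) (hDc : IsCompact D) (hDconv : Convex ℝ D)
    (hD : D ⊆ interior (deltaOf Γ)) :
    ∃ S : Finset (Fin (d+1) → ℕ), (S : Set (Fin (d+1) → ℕ)) ⊆ Γ ∧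
      (↑(AddSubmonoid.closure (S : Set (Fin (d+1) → ℕ))) : Set (Fin (d+1) → ℕ)) ⊆ Γ ∧
      gensGroup (↑(AddSubmonoid.closure (S : Set (Fin (d+1) → ℕ))) : Set (Fin (d+1) → ℕ)) ∧
      D ⊆ interior
        (deltaOf (↑(AddSubmonoid.closure (S : Set (Fin (d+1) → ℕ))) : Set (Fin (d+1) → ℕ))) := by
  classical
  unfold gensGroup at hgen
  obtain ⟨t, B, hts, hBval⟩ := exists_basis_in_image Γ hgen
  have hmemt : ∀ v : ↥(↑t : Set (Fin (d+1) → ℝ)), (↑v : Fin (d+1) → ℝ) ∈ natVecR '' Γ :=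
    fun v => hts v.2
  choose τ hτΓ hτeq using hmemt
  have hB : ∀ v, B v = natVecR (τ v) := fun v => by rw [hBval v, ← hτeq v]
  obtain ⟨S₀, hS₀Γ, hS₀gen⟩ := exists_finset_gens Γ hgen
  have key : ∀ x ∈ D, ∃ S : Finset (Fin (d+1) → ℕ),
      (↑S : Set (Fin (d+1) → ℕ)) ⊆ Γ ∧ x ∈ interior (deltaOf (↑S : Set (Fin (d+1) → ℕ))) := by
    intro x hx
    have hp := snoc_mem_interior_coneOf (hD hx)
    obtain ⟨S, hSΓ, _, hpS⟩ := exists_finset_interior_coneOf Γ B τ hτΓ hB hp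
    exact ⟨S, hSΓ, mem_interior_deltaOf hpS⟩
  choose! Sx hSxΓ hSxint using key
  obtain ⟨F, hF⟩ := hDc.elim_finite_subcover
    (fun z : ↥D => interior (deltaOf (↑(Sx ↑z) : Set (Fin (d+1) → ℕ))))
    (fun _ => isOpen_interior)
    (fun x hx => Set.mem_iUnion.mpr ⟨⟨x, hx⟩, hSxint x hx⟩)
  refine ⟨S₀ ∪ F.biUnion (fun z => Sx ↑z), ?_, ?_, ?_, ?_⟩
  case refine_1 =>
    intro a ha
    simp only [Finset.coe_union, Set.mem_union, Finset.coe_biUnion, Set.mem_iUnion] at ha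
    rcases ha with h | ⟨z, _, h⟩
    · exact hS₀Γ h
    · exact hSxΓ ↑z z.2 h
  case refine_2 =>
    intro a ha
    have hsub : (↑(S₀ ∪ F.biUnion (fun z => Sx ↑z)) : Set (Fin (d+1) → ℕ)) ⊆ Γ := by
      intro b hb
      simp only [Finset.coe_union, Set.mem_union, Finset.coe_biUnion, Set.mem_iUnion] at hb
      rcases hb with h | ⟨z, _, h⟩
      · exact hS₀Γ h
      · exact hSxΓ ↑z z.2 h
    let ΓM : AddSubmonoid (Fin (d+1) → ℕ) :=
      { carrier := Γ
        add_mem' := fun {a b} ha hb => hadd a ha b hb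
        zero_mem' := h0 }
    have hle : AddSubmonoid.closure (↑(S₀ ∪ F.biUnion (fun z => Sx ↑z)) : Set (Fin (d+1) → ℕ)) ≤ ΓM :=
      AddSubmonoid.closure_le.mpr (fun b hb => show b ∈ ΓM from hsub hb)
    exact hle ha
  case refine_3 =>
    unfold gensGroup
    rw [eq_top_iff, ← hS₀gen]
    refine AddSubgroup.closure_mono (Set.image_mono ?_)
    intro a ha
    exact AddSubmonoid.subset_closure (by
      simp only [Finset.coe_union, Set.mem_union]
      exact Or.inl ha)
  case refine_4 =>
    intro x hx
    obtain ⟨z, hzF, hxz⟩ := Set.mem_iUnion₂.mp (hF hx)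
    refine interior_mono (deltaOf_mono ?_) hxz
    intro a ha
    refine AddSubmonoid.subset_closure ?_
    simp only [Finset.coe_union, Set.mem_union, Finset.coe_biUnion, Set.mem_iUnion]
    exact Or.inr ⟨z, hzF, ha⟩
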